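/- The interior of the semigroup S = {s ∈ SL(2,ℂ) : s⁻¹·D ⊆ D} is S° = {s ∈ SL(2,ℂ) : s⁻¹·D̄ ⊆ D}, and S° is nonempty. -/

import Mathlib

open Matrix

/-- `SL(2,ℂ)` carries the subspace topology of the space of `2×2` complex matrices. -/
noncomputable instance : TopologicalSpace (Matrix.SpecialLinearGroup (Fin 2) ℂ) :=
  TopologicalSpace.induced (fun g => (g : Matrix (Fin 2) (Fin 2) ℂ)) inferInstance

/-- `g` maps the open unit disc into itself under the Möbius action. -/
def mapsDiscIntoDisc (g : Matrix.SpecialLinearGroup (Fin 2) ℂ) : Prop :=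
  ∀ z : ℂ, ‖z‖ < 1 →
    ‖((g : Matrix (Fin 2) (Fin 2) ℂ) 0 0 * z + (g : Matrix (Fin 2) (Fin 2) ℂ) 0 1)‖
      < ‖((g : Matrix (Fin 2) (Fin 2) ℂ) 1 0 * z + (g : Matrix (Fin 2) (Fin 2) ℂ) 1 1)‖

/-- `g` maps the closed unit disc into the open unit disc under the Möbius action. -/
def mapsClosedDiscIntoDisc (g : Matrix.SpecialLinearGroup (Fin 2) ℂ) : Prop :=
  ∀ z : ℂ, ‖z‖ ≤ 1 →
    ‖((g : Matrix (Fin 2) (Fin 2) ℂ) 0 0 * z + (g : Matrix (Fin 2) (Fin 2) ℂ) 0 1)‖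
      < ‖((g : Matrix (Fin 2) (Fin 2) ℂ) 1 0 * z + (g : Matrix (Fin 2) (Fin 2) ℂ) 1 1)‖

open Topology Filter

abbrev SL2 := Matrix.SpecialLinearGroup (Fin 2) ℂ

lemma cont_coe : Continuous (fun s : SL2 => (s : Matrix (Fin 2) (Fin 2) ℂ)) :=
  continuous_induced_dom

lemma cont_entry (i j : Fin 2) : Continuous (fun s : SL2 => (s : Matrix (Fin 2) (Fin 2) ℂ) i j) :=
  ((continuous_apply j).comp ((continuous_apply i).comp cont_coe) : _)

lemma coe_inv_eq (s : SL2) : ((s⁻¹ : SL2) : Matrix (Fin 2) (Fin 2) ℂ)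
    = !![(s : Matrix (Fin 2) (Fin 2) ℂ) 1 1, -(s : Matrix (Fin 2) (Fin 2) ℂ) 0 1;
        -(s : Matrix (Fin 2) (Fin 2) ℂ) 1 0, (s : Matrix (Fin 2) (Fin 2) ℂ) 0 0] := by
  rw [Matrix.SpecialLinearGroup.coe_inv, Matrix.adjugate_fin_two]

lemma cont_inv_entry (i j : Fin 2) :
    Continuous (fun s : SL2 => ((s⁻¹ : SL2) : Matrix (Fin 2) (Fin 2) ℂ) i j) := by
  simp only [coe_inv_eq]
  fin_cases i <;> fin_cases j <;> simp <;>
    first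
      | exact (cont_entry _ _).neg
      | exact cont_entry _ _

def U : Set (SL2 × ℂ) := {p | ‖(((p.1⁻¹ : SL2) : Matrix (Fin 2) (Fin 2) ℂ) 0 0 * p.2
      + ((p.1⁻¹ : SL2) : Matrix (Fin 2) (Fin 2) ℂ) 0 1)‖
      < ‖(((p.1⁻¹ : SL2) : Matrix (Fin 2) (Fin 2) ℂ) 1 0 * p.2
      + ((p.1⁻¹ : SL2) : Matrix (Fin 2) (Fin 2) ℂ) 1 1)‖}

lemma hUopen : IsOpen U := by
  apply isOpen_lt
  · exact continuous_norm.comp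
      ((((cont_inv_entry 0 0).comp continuous_fst).mul continuous_snd).add
        ((cont_inv_entry 0 1).comp continuous_fst))
  · exact continuous_norm.comp
      ((((cont_inv_entry 1 0).comp continuous_fst).mul continuous_snd).add
        ((cont_inv_entry 1 1).comp continuous_fst))
lemma Qopen : IsOpen {s : SL2 | mapsClosedDiscIntoDisc s⁻¹} := by
  have hK : IsCompact (Metric.closedBall (0:ℂ) 1) := isCompact_closedBall 0 1
  rw [isOpen_iff_mem_nhds]
  intro s hs
  have hsub : {s} ×ˢ Metric.closedBall (0:ℂ) 1 ⊆ U := by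
    rintro ⟨t, z⟩ ⟨ht, hz⟩
    simp only [Set.mem_singleton_iff] at ht
    subst ht
    exact hs z (by simpa using Metric.mem_closedBall.mp hz)
  obtain ⟨v, w, hv, -, hsv, hkw, hvw⟩ :=
    generalized_tube_lemma isCompact_singleton hK hUopen hsub
  refine Filter.mem_of_superset (hv.mem_nhds (hsv rfl)) ?_
  intro t ht
  show mapsClosedDiscIntoDisc t⁻¹
  intro z hz
  have hzball : z ∈ Metric.closedBall (0:ℂ) 1 := by
    simpa [Metric.mem_closedBall, dist_zero_right] using hz
  have h1 : (t, z) ∈ U := hvw ⟨ht, hkw hzball⟩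
  exact h1

lemma Dr_tendsto (S : Matrix (Fin 2) (Fin 2) ℂ) :
    Filter.Tendsto (fun r : ℝ => !![((r:ℂ)), 0; 0, ((r:ℂ))⁻¹] * S) (𝓝 1) (𝓝 S) := by
  have h1 : Filter.Tendsto (fun r : ℝ => (!![((r:ℂ)), 0; 0, ((r:ℂ))⁻¹] : Matrix (Fin 2) (Fin 2) ℂ))
      (𝓝 1) (𝓝 (1 : Matrix (Fin 2) (Fin 2) ℂ)) := by
    have : (1 : Matrix (Fin 2) (Fin 2) ℂ) = !![((1:ℝ):ℂ), 0; 0, (((1:ℝ):ℂ))⁻¹] := by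
      rw [Matrix.one_fin_two]
      norm_num
    rw [this]; refine tendsto_pi_nhds.mpr ?_
    intro i
    rw [tendsto_pi_nhds]
    intro j
    have hr : Filter.Tendsto (fun r : ℝ => ((r:ℂ))) (𝓝 1) (𝓝 1) :=
      Complex.continuous_ofReal.continuousAt
    have hrinv : Filter.Tendsto (fun r : ℝ => ((r:ℂ))⁻¹) (𝓝 1) (𝓝 1) := by
      have := (continuousAt_inv₀ (x := (1:ℂ)) one_ne_zero).tendsto.comp hr
      simpa using hr.inv₀ one_ne_zero
    fin_cases i <;> fin_cases j <;> simp <;> first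
      | exact hr | exact hrinv | exact tendsto_const_nhds
  have h2 := h1.mul (tendsto_const_nhds (x := S))
  simpa using h2

lemma interior_subset_Q :
    interior {s : SL2 | mapsDiscIntoDisc s⁻¹} ⊆ {s : SL2 | mapsClosedDiscIntoDisc s⁻¹} := by
  intro s hs
  have hsP : mapsDiscIntoDisc s⁻¹ := interior_subset hs
  show mapsClosedDiscIntoDisc s⁻¹
  by_contra hQ
  rw [mapsClosedDiscIntoDisc] at hQ
  push_neg at hQ
  obtain ⟨z₀, hz₀le, hge⟩ := hQ
  have hz₀ : ‖z₀‖ = 1 := by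
    rcases lt_or_eq_of_le hz₀le with h | h
    · exact absurd (hsP z₀ h) (not_lt.mpr hge)
    · exact h
  have hT : {t : SL2 | mapsDiscIntoDisc t⁻¹} ∈ 𝓝 s := mem_interior_iff_mem_nhds.mp hs
  rw [nhds_induced] at hT
  obtain ⟨T, hTn, hTsub⟩ := Filter.mem_comap.mp hT
  have htend := Dr_tendsto ((s : SL2) : Matrix (Fin 2) (Fin 2) ℂ)
  have h2 : ∀ᶠ (r:ℝ) in 𝓝[<] (1:ℝ),
      !![((r:ℂ)), 0; 0, ((r:ℂ))⁻¹] * ((s : SL2) : Matrix (Fin 2) (Fin 2) ℂ) ∈ T :=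
    (htend.mono_left nhdsWithin_le_nhds).eventually (Filter.eventually_mem_set.mpr hTn)
  have h3 : ∀ᶠ r in 𝓝[<] (1:ℝ), (0:ℝ) < r :=
    ((eventually_gt_nhds (by norm_num : (0:ℝ) < 1)).filter_mono nhdsWithin_le_nhds)
  have h4 : ∀ᶠ r in 𝓝[<] (1:ℝ), r < 1 := eventually_mem_nhdsWithin
  obtain ⟨r, hrT, hr0, hr1⟩ := (h2.and (h3.and h4)).exists
  have hrC : ((r:ℂ)) ≠ 0 := by exact_mod_cast hr0.ne'
  set d : SL2 := ⟨!![(r:ℂ), 0; 0, (r:ℂ)⁻¹], by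
    simp [Matrix.det_fin_two_of, mul_inv_cancel₀ hrC]⟩ with hd
  set t : SL2 := d * s with hts
  have htP : mapsDiscIntoDisc t⁻¹ := by
    apply hTsub
    show ((t : SL2) : Matrix (Fin 2) (Fin 2) ℂ) ∈ T
    rw [hts, Matrix.SpecialLinearGroup.coe_mul]
    exact hrT
  have hcoe : ((t⁻¹ : SL2) : Matrix (Fin 2) (Fin 2) ℂ)
      = !![((s⁻¹ : SL2) : Matrix (Fin 2) (Fin 2) ℂ) 0 0 * (r:ℂ)⁻¹,
           ((s⁻¹ : SL2) : Matrix (Fin 2) (Fin 2) ℂ) 0 1 * (r:ℂ);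
           ((s⁻¹ : SL2) : Matrix (Fin 2) (Fin 2) ℂ) 1 0 * (r:ℂ)⁻¹,
           ((s⁻¹ : SL2) : Matrix (Fin 2) (Fin 2) ℂ) 1 1 * (r:ℂ)] := by
    rw [hts, _root_.mul_inv_rev, Matrix.SpecialLinearGroup.coe_mul,
      Matrix.SpecialLinearGroup.coe_inv d, hd]
    rw [show ((⟨!![(r:ℂ), 0; 0, (r:ℂ)⁻¹], by
      simp [Matrix.det_fin_two_of, mul_inv_cancel₀ hrC]⟩ : SL2) : Matrix (Fin 2) (Fin 2) ℂ)
      = !![(r:ℂ), 0; 0, (r:ℂ)⁻¹] from rfl, Matrix.adjugate_fin_two]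
    ext i j
    fin_cases i <;> fin_cases j <;>
      simp [Matrix.mul_apply, Fin.sum_univ_two]
  have hzlt : ‖((r:ℂ)^2 * z₀)‖ < 1 := by
    rw [norm_mul, norm_pow, Complex.norm_real, Real.norm_eq_abs, abs_of_pos hr0, hz₀, mul_one]
    nlinarith
  have hkey := htP ((r:ℂ)^2 * z₀) hzlt
  rw [hcoe] at hkey
  rw [show ∀ a b c d : ℂ, (!![a, b; c, d] : Matrix (Fin 2) (Fin 2) ℂ) 0 0 = a from fun _ _ _ _ => rfl,
    show ∀ a b c d : ℂ, (!![a, b; c, d] : Matrix (Fin 2) (Fin 2) ℂ) 0 1 = b from fun _ _ _ _ => rfl,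
    show ∀ a b c d : ℂ, (!![a, b; c, d] : Matrix (Fin 2) (Fin 2) ℂ) 1 0 = c from fun _ _ _ _ => rfl,
    show ∀ a b c d : ℂ, (!![a, b; c, d] : Matrix (Fin 2) (Fin 2) ℂ) 1 1 = d from fun _ _ _ _ => rfl] at hkey
  have e2 : ∀ x y : ℂ, x * (r:ℂ)⁻¹ * ((r:ℂ)^2 * z₀) + y * (r:ℂ) = (r:ℂ) * (x * z₀ + y) := by
    intro x y
    field_simp
  rw [e2, e2, norm_mul, norm_mul, Complex.norm_real, Real.norm_eq_abs, abs_of_pos hr0] at hkey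
  have := (mul_lt_mul_iff_right₀ hr0).mp hkey
  exact absurd this (not_lt.mpr hge)

lemma Qsub : {s : SL2 | mapsClosedDiscIntoDisc s⁻¹} ⊆ {s : SL2 | mapsDiscIntoDisc s⁻¹} :=
  fun _ h z hz => h z hz.le

lemma Qnonempty : {s : SL2 | mapsClosedDiscIntoDisc s⁻¹}.Nonempty := by
  have hdet : Matrix.det (!![(1/2 : ℂ), 0; 0, 2]) = 1 := by
    simp [Matrix.det_fin_two_of]
  set m : SL2 := ⟨!![(1/2 : ℂ), 0; 0, 2], hdet⟩ with hm
  refine ⟨m⁻¹, ?_⟩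
  show mapsClosedDiscIntoDisc m⁻¹⁻¹
  rw [inv_inv]
  intro z hz
  have hcoe : ((m : SL2) : Matrix (Fin 2) (Fin 2) ℂ) = !![(1/2 : ℂ), 0; 0, 2] := rfl
  rw [hcoe]
  rw [show (!![(1/2 : ℂ), 0; 0, 2] : Matrix (Fin 2) (Fin 2) ℂ) 0 0 = 1/2 from rfl,
    show (!![(1/2 : ℂ), 0; 0, 2] : Matrix (Fin 2) (Fin 2) ℂ) 0 1 = 0 from rfl,
    show (!![(1/2 : ℂ), 0; 0, 2] : Matrix (Fin 2) (Fin 2) ℂ) 1 0 = 0 from rfl,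
    show (!![(1/2 : ℂ), 0; 0, 2] : Matrix (Fin 2) (Fin 2) ℂ) 1 1 = 2 from rfl]
  rw [add_zero, zero_mul, zero_add, norm_mul]
  have h2 : ‖(2:ℂ)‖ = 2 := by norm_num
  have h12 : ‖(1/2:ℂ)‖ = 1/2 := by norm_num
  rw [h12, h2]
  nlinarith [norm_nonneg z]

/-- the interior of `S = {s : s⁻¹·D ⊆ D}` is
`S° = {s : s⁻¹·D̄ ⊆ D}`, and `S°` is nonempty. -/
theorem compression_semigroup_interior :
    interior {s : Matrix.SpecialLinearGroup (Fin 2) ℂ | mapsDiscIntoDisc s⁻¹}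
      = {s : Matrix.SpecialLinearGroup (Fin 2) ℂ | mapsClosedDiscIntoDisc s⁻¹} ∧
    {s : Matrix.SpecialLinearGroup (Fin 2) ℂ | mapsClosedDiscIntoDisc s⁻¹}.Nonempty := by
  exact ⟨Set.Subset.antisymm interior_subset_Q (interior_maximal Qsub Qopen), Qnonempty⟩
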